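/- arXiv:1306.6092 — 3 statements merged into one kernel-verified Lean document; each statement's English description precedes it below -/
import Mathlib

section
/- In a metric tree (uniquely geodesic metric space where the union of two segments meeting in a single point is a segment), the unique geodesic segment [x,y] equals the set {z ∈ M : d(x,y) = d(x,z) + d(z,y)}. -/
open Set

/-- A geodesic segment from `x` to `y`: the image of an isometric embedding of a
real interval `[a,b]` sending `a` to `x` and `b` to `y`. -/
def IsGeodesicSegment {X : Type*} [MetricSpace X] (s : Set X) (x y : X) : Prop :=
  ∃ a b : ℝ, a ≤ b ∧ ∃ f : ℝ → X,
    (∀ u ∈ Icc a b, ∀ v ∈ Icc a b, dist (f u) (f v) = |u - v|) ∧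
    f a = x ∧ f b = y ∧ s = f '' Icc a b

lemma aux_mem_left {X : Type*} [MetricSpace X] {s : Set X} {x y : X}
    (h : IsGeodesicSegment s x y) : x ∈ s := by
  obtain ⟨a, b, hab, f, hf, hfa, hfb, hseq⟩ := h
  rw [hseq]; exact ⟨a, ⟨le_refl a, hab⟩, hfa⟩

lemma aux_mem_right {X : Type*} [MetricSpace X] {s : Set X} {x y : X}
    (h : IsGeodesicSegment s x y) : y ∈ s := by
  obtain ⟨a, b, hab, f, hf, hfa, hfb, hseq⟩ := h
  rw [hseq]; exact ⟨b, ⟨hab, le_refl b⟩, hfb⟩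

lemma aux_between {X : Type*} [MetricSpace X] {s : Set X} {x y : X}
    (h : IsGeodesicSegment s x y) : ∀ w ∈ s, dist x w + dist w y = dist x y := by
  obtain ⟨a, b, hab, f, hf, hfa, hfb, hseq⟩ := h
  rintro w hw
  rw [hseq] at hw
  obtain ⟨u, hu, rfl⟩ := hw
  have ha : a ∈ Icc a b := ⟨le_refl a, hab⟩
  have hb : b ∈ Icc a b := ⟨hab, le_refl b⟩
  rw [← hfa, ← hfb, hf a ha u hu, hf u hu b hb, hf a ha b hb]
  rw [abs_of_nonpos (by linarith [hu.1]), abs_of_nonpos (by linarith [hu.2]),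
    abs_of_nonpos (by linarith)]
  ring

theorem geodesicSegment_eq_between_set {X : Type*} [MetricSpace X]
    (hunique : ∀ x y : X, ∃! s : Set X, IsGeodesicSegment s x y)
    (hglue : ∀ (x y z : X) (s t : Set X), IsGeodesicSegment s y x →
      IsGeodesicSegment t x z → s ∩ t = {x} → IsGeodesicSegment (s ∪ t) y z)
    (x y : X) (s : Set X) (hs : IsGeodesicSegment s x y) :
    s = {z : X | dist x y = dist x z + dist z y} := by
  ext z
  simp only [mem_setOf_eq]
  constructor
  · intro hz
    exact (aux_between hs z hz).symm
  · intro hz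
    obtain ⟨s1, hs1, -⟩ := hunique x z
    obtain ⟨s2, hs2, -⟩ := hunique z y
    have hinter : s1 ∩ s2 = {z} := by
      apply Subset.antisymm
      · rintro w ⟨h1, h2⟩
        have b1 := aux_between hs1 w h1
        have b2 := aux_between hs2 w h2
        have tri := dist_triangle x w y
        have hcomm : dist w z = dist z w := dist_comm w z
        have hnn : 0 ≤ dist w z := dist_nonneg
        have : dist w z = 0 := by linarith
        have : w = z := by rwa [dist_eq_zero] at this
        exact this ▸ rfl
      · rintro w rfl
        exact ⟨aux_mem_right hs1, aux_mem_left hs2⟩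
    have hglued := hglue z x y s1 s2 hs1 hs2 hinter
    obtain ⟨s', hs', huniq⟩ := hunique x y
    rw [huniq s hs, ← huniq _ hglued]
    exact Or.inl (aux_mem_right hs1)
end

section
/- In a uniquely geodesic metric space satisfying the segment-gluing axiom, if P is the nearest-point projection onto a segment [x,y] and z is a point with projection P(z), then for any point u with d(u,z) < d(z, P(z)) lying on an arc disjoint from [x,y] except at endpoints, P(u) = P(z); consequently any arc joining x and y must coincide with [x,y]. -/
open Set

/-- An arc joining `x` and `y`: a homeomorphic image of a closed real interval
with endpoints `x` and `y`. -/
def IsArc {X : Type*} [MetricSpace X] (A : Set X) (x y : X) : Prop :=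
  ∃ a b : ℝ, a ≤ b ∧ ∃ f : ℝ → X,
    ContinuousOn f (Icc a b) ∧ InjOn f (Icc a b) ∧
    f a = x ∧ f b = y ∧ A = f '' Icc a b

section aux
variable {X : Type*} [MetricSpace X]

lemma iso_continuousOn {a b : ℝ} {f : ℝ → X}
    (hiso : ∀ u ∈ Icc a b, ∀ v ∈ Icc a b, dist (f u) (f v) = |u - v|) :
    ContinuousOn f (Icc a b) := by
  refine Metric.continuousOn_iff.mpr fun v hv ε hε => ⟨ε, hε, fun u hu hd => ?_⟩
  rw [hiso u hu v hv]
  rwa [Real.dist_eq] at hd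

lemma geo_mem_left {s : Set X} {x y : X} (h : IsGeodesicSegment s x y) : x ∈ s := by
  obtain ⟨a, b, hab, f, _, hfa, _, rfl⟩ := h
  exact ⟨a, ⟨le_rfl, hab⟩, hfa⟩

lemma geo_mem_right {s : Set X} {x y : X} (h : IsGeodesicSegment s x y) : y ∈ s := by
  obtain ⟨a, b, hab, f, _, _, hfb, rfl⟩ := h
  exact ⟨b, ⟨hab, le_rfl⟩, hfb⟩

lemma geo_isClosed {s : Set X} {x y : X} (h : IsGeodesicSegment s x y) : IsClosed s := by
  obtain ⟨a, b, hab, f, hiso, _, _, rfl⟩ := h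
  exact (isCompact_Icc.image_of_continuousOn (iso_continuousOn hiso)).isClosed

lemma geo_dist_add {s : Set X} {x y : X} (h : IsGeodesicSegment s x y) {w : X} (hw : w ∈ s) :
    dist x w + dist w y = dist x y := by
  obtain ⟨a, b, hab, f, hiso, hfa, hfb, rfl⟩ := h
  obtain ⟨t, ht, rfl⟩ := hw
  rw [← hfa, ← hfb, hiso a ⟨le_rfl, hab⟩ t ht, hiso t ht b ⟨hab, le_rfl⟩,
      hiso a ⟨le_rfl, hab⟩ b ⟨hab, le_rfl⟩,
      abs_of_nonpos (by linarith [ht.1] : a - t ≤ 0),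
      abs_of_nonpos (by linarith [ht.2] : t - b ≤ 0),
      abs_of_nonpos (by linarith : a - b ≤ 0)]
  ring

lemma geo_restrict {a b : ℝ} {f : ℝ → X}
    (hiso : ∀ u ∈ Icc a b, ∀ v ∈ Icc a b, dist (f u) (f v) = |u - v|)
    {t1 t2 : ℝ} (h1 : t1 ∈ Icc a b) (h2 : t2 ∈ Icc a b) (h12 : t1 ≤ t2) :
    IsGeodesicSegment (f '' Icc t1 t2) (f t1) (f t2) :=
  ⟨t1, t2, h12, f, fun u hu v hv =>
      hiso u (Icc_subset_Icc h1.1 h2.2 hu) v (Icc_subset_Icc h1.1 h2.2 hv),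
    rfl, rfl, rfl⟩

lemma geo_symm {s : Set X} {x y : X} (h : IsGeodesicSegment s x y) :
    IsGeodesicSegment s y x := by
  obtain ⟨a, b, hab, f, hiso, hfa, hfb, rfl⟩ := h
  have hmem : ∀ t ∈ Icc a b, a + b - t ∈ Icc a b := fun t ht => ⟨by linarith [ht.2], by linarith [ht.1]⟩
  refine ⟨a, b, hab, fun t => f (a + b - t), fun u hu v hv => ?_, by simpa, by simpa, ?_⟩
  · rw [hiso _ (hmem u hu) _ (hmem v hv)]
    rw [show a + b - u - (a + b - v) = v - u by ring, abs_sub_comm]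
  · have : (fun t => f (a + b - t)) '' Icc a b = f '' ((fun t => a + b - t) '' Icc a b) := by
      rw [← image_comp]; rfl
    rw [this, show (fun t => a + b - t) '' Icc a b = Icc a b by
      rw [show (fun t => a + b - t) = (fun t => (a + b) - t) from rfl, image_const_sub_Icc]
      ring_nf]

end aux

theorem projection_locally_constant_and_arc_unique {X : Type*} [MetricSpace X]
    (hunique : ∀ x y : X, ∃! s : Set X, IsGeodesicSegment s x y)
    (hglue : ∀ (x y z : X) (s t : Set X), IsGeodesicSegment s y x →
      IsGeodesicSegment t x z → s ∩ t = {x} → IsGeodesicSegment (s ∪ t) y z)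
    (x y : X) (s : Set X) (hs : IsGeodesicSegment s x y)
    (P : X → X) (hPmem : ∀ m : X, P m ∈ s)
    (hPnear : ∀ m : X, ∀ q ∈ s, dist m (P m) ≤ dist m q)
    (hPnonexp : ∀ m m' : X, dist (P m) (P m') ≤ dist m m') :
    (∀ A : Set X, IsArc A x y → A ∩ s = {x, y} →
      ∀ z ∈ A, ∀ u ∈ A, dist u z < dist z (P z) → P u = P z) ∧
    (∀ A : Set X, IsArc A x y → A = s) := by
  classical
  choose Seg hSeg hUniq using hunique
  have hxs : x ∈ s := geo_mem_left hs
  have hys : y ∈ s := geo_mem_right hs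
  have hsClosed : IsClosed s := geo_isClosed hs
  have hPfix : ∀ m ∈ s, P m = m := by
    intro m hm
    have h1 := hPnear m m hm
    simp only [dist_self] at h1
    have : dist m (P m) = 0 := le_antisymm h1 dist_nonneg
    rw [dist_comm] at this
    exact dist_eq_zero.mp this
  -- glue additivity
  have hAdd : ∀ p q r : X, Seg p q ∩ Seg q r = {q} → dist p q + dist q r = dist p r := by
    intro p q r hpqr
    have hg := hglue q p r (Seg p q) (Seg q r) (hSeg p q) (hSeg q r) hpqr
    exact geo_dist_add hg (Or.inl (geo_mem_right (hSeg p q)))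
  -- subsegments of s stay in s
  have hSubS : ∀ p ∈ s, ∀ q ∈ s, Seg p q ⊆ s := by
    intro p hp q hq
    obtain ⟨c, d, hcd, h, hiso, hhc, hhd, hsim⟩ := hs
    rw [hsim] at hp hq ⊢
    obtain ⟨t1, ht1, rfl⟩ := hp
    obtain ⟨t2, ht2, rfl⟩ := hq
    rcases le_total t1 t2 with h12 | h21
    · rw [← hUniq _ _ _ (geo_restrict hiso ht1 ht2 h12)]
      exact image_mono (Icc_subset_Icc ht1.1 ht2.2)
    · rw [← hUniq _ _ _ (geo_symm (geo_restrict hiso ht2 ht1 h21))]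
      exact image_mono (Icc_subset_Icc ht2.1 ht1.2)
  -- K2 : first-entry characterization of P
  have hK2 : ∀ z p, p ∈ s → Seg z p ∩ s = {p} → p = P z := by
    intro z p hp hint
    have hsub : Seg p (P z) ⊆ s := hSubS p hp (P z) (hPmem z)
    have hcond : Seg z p ∩ Seg p (P z) = {p} := by
      apply Subset.antisymm
      · rintro v ⟨hv1, hv2⟩
        rw [← hint]; exact ⟨hv1, hsub hv2⟩
      · rintro v rfl
        exact ⟨geo_mem_right (hSeg z v), geo_mem_left (hSeg v (P z))⟩
    have hadd := hAdd z p (P z) hcond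
    have h1 : dist z (P z) ≤ dist z p := hPnear z p hp
    have h2 : dist p (P z) ≤ 0 := by linarith
    have := le_antisymm h2 dist_nonneg
    exact dist_eq_zero.mp this
  -- K4 : Seg z (P z) meets s only in P z
  have hK4 : ∀ z : X, Seg z (P z) ∩ s = {P z} := by
    intro z
    obtain ⟨a, b, hab, f, hiso, hfa, hfb, him⟩ := hSeg z (P z)
    set K := {t ∈ Icc a b | f t ∈ s} with hK
    have hKcl : IsClosed K :=
      (iso_continuousOn hiso).preimage_isClosed_of_isClosed isClosed_Icc hsClosed
    have hbK : b ∈ K := ⟨⟨hab, le_rfl⟩, by rw [hfb]; exact hPmem z⟩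
    have hKbdd : BddBelow K := ⟨a, fun t ht => ht.1.1⟩
    set T := sInf K with hT
    have hTK : T ∈ K := hKcl.csInf_mem ⟨b, hbK⟩ hKbdd
    have hTb : T ≤ b := csInf_le hKbdd hbK
    have haT : a ≤ T := hTK.1.1
    -- Seg z (f T) = f '' Icc a T
    have hres := geo_restrict hiso ⟨le_rfl, hab⟩ hTK.1 haT
    rw [hfa] at hres
    have hSegzT : Seg z (f T) = f '' Icc a T := (hUniq _ _ _ hres).symm
    have hentry : Seg z (f T) ∩ s = {f T} := by
      rw [hSegzT]
      apply Subset.antisymm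
      · rintro v ⟨⟨t, ht, rfl⟩, hvs⟩
        have htK : t ∈ K := ⟨⟨ht.1, le_trans ht.2 hTb⟩, hvs⟩
        have : T ≤ t := csInf_le hKbdd htK
        have : t = T := le_antisymm ht.2 this
        rw [this]; rfl
      · rintro v rfl
        exact ⟨⟨T, ⟨haT, le_rfl⟩, rfl⟩, hTK.2⟩
    have hfT : f T = P z := hK2 z (f T) hTK.2 hentry
    -- T = b
    have hTeq : T = b := by
      have e1 : dist (f a) (f T) = |a - T| := hiso a ⟨le_rfl, hab⟩ T hTK.1
      have e2 : dist (f a) (f b) = |a - b| := hiso a ⟨le_rfl, hab⟩ b ⟨hab, le_rfl⟩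
      rw [hfT, ← hfb] at e1
      rw [e2, abs_of_nonpos (by linarith : a - T ≤ 0), abs_of_nonpos (by linarith : a - b ≤ 0)] at e1
      linarith
    -- conclude
    rw [him]
    apply Subset.antisymm
    · rintro v ⟨⟨t, ht, rfl⟩, hvs⟩
      have htK : t ∈ K := ⟨ht, hvs⟩
      have : T ≤ t := csInf_le hKbdd htK
      have : t = b := le_antisymm ht.2 (hTeq ▸ this)
      rw [this, hfb]; rfl
    · rintro v rfl
      exact ⟨⟨b, ⟨hab, le_rfl⟩, hfb⟩, hPmem z⟩
  -- B : local constancy of P off s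
  have hB : ∀ z u : X, dist u z < dist z (P z) → P u = P z := by
    intro z u hlt
    have hD : ∀ v ∈ Seg u z, v ∉ s := by
      intro v hv hvs
      have h1 : dist u v + dist v z = dist u z := geo_dist_add (hSeg u z) hv
      have h2 : dist z (P z) ≤ dist z v := hPnear z v hvs
      rw [dist_comm z v] at h2
      have h3 : (0:ℝ) ≤ dist u v := dist_nonneg
      linarith
    obtain ⟨a, b, hab, f, hiso, hfa, hfb, him⟩ := hSeg z (P z)
    have hK4z : Seg z (P z) ∩ s = {P z} := hK4 z
    set K := {t ∈ Icc a b | f t ∈ Seg u z} with hK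
    have hKcl : IsClosed K :=
      (iso_continuousOn hiso).preimage_isClosed_of_isClosed isClosed_Icc (geo_isClosed (hSeg u z))
    have haK : a ∈ K := ⟨⟨le_rfl, hab⟩, by rw [hfa]; exact geo_mem_right (hSeg u z)⟩
    have hKbdd : BddAbove K := ⟨b, fun t ht => ht.1.2⟩
    set T := sSup K with hT
    have hTK : T ∈ K := hKcl.csSup_mem ⟨a, haK⟩ hKbdd
    have haT : a ≤ T := le_csSup hKbdd haK
    have hTb : T ≤ b := hTK.1.2
    set w := f T with hw
    -- Seg u w ⊆ Seg u z
    have huw_sub : Seg u w ⊆ Seg u z := by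
      obtain ⟨c, d, hcd, g, giso, hgc, hgd, hgim⟩ := hSeg u z
      have hwmem : w ∈ Seg u z := hTK.2
      rw [hgim] at hwmem ⊢
      obtain ⟨r, hr, hrw⟩ := hwmem
      have hres := geo_restrict giso ⟨le_rfl, hcd⟩ hr hr.1
      rw [hgc, hrw] at hres
      rw [← hUniq _ _ _ hres]
      exact image_mono (Icc_subset_Icc le_rfl hr.2)
    -- Seg w (P z) = f '' Icc T b
    have hres2 := geo_restrict hiso hTK.1 ⟨hab, le_rfl⟩ hTb
    rw [hfb] at hres2
    have hwp : Seg w (P z) = f '' Icc T b := (hUniq _ _ _ hres2).symm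
    have hwp_sub : Seg w (P z) ⊆ Seg z (P z) := by
      rw [hwp, him]; exact image_mono (Icc_subset_Icc haT le_rfl)
    -- intersection is {w}
    have hint : Seg u w ∩ Seg w (P z) = {w} := by
      apply Subset.antisymm
      · rintro v ⟨hv1, hv2⟩
        rw [hwp] at hv2
        obtain ⟨r, hr, rfl⟩ := hv2
        have hrK : r ∈ K := ⟨⟨le_trans haT hr.1, hr.2⟩, huw_sub hv1⟩
        have : r ≤ T := le_csSup hKbdd hrK
        have : r = T := le_antisymm this hr.1
        rw [this]; rfl
      · rintro v rfl
        exact ⟨geo_mem_right (hSeg u w), geo_mem_left (hSeg w (P z))⟩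
    have hunion := hglue w u (P z) (Seg u w) (Seg w (P z)) (hSeg u w) (hSeg w (P z)) hint
    have hEq : Seg u (P z) = Seg u w ∪ Seg w (P z) := (hUniq _ _ _ hunion).symm
    have hfin : Seg u (P z) ∩ s = {P z} := by
      rw [hEq]
      apply Subset.antisymm
      · rintro v ⟨hv | hv, hvs⟩
        · exact absurd hvs (hD v (huw_sub hv))
        · have : v ∈ Seg z (P z) ∩ s := ⟨hwp_sub hv, hvs⟩
          rw [hK4z] at this; exact this
      · rintro v rfl
        exact ⟨Or.inr (geo_mem_right (hSeg w (P z))), hPmem z⟩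
    exact (hK2 u (P z) (hPmem z) hfin).symm
  refine ⟨fun A _ _ z _ u _ hlt => hB z u hlt, ?_⟩
  -- Part 2
  intro A hA
  obtain ⟨a, b, hab, f, hfc, hfi, hfa, hfb, hAim⟩ := hA
  obtain ⟨c, d, hcd, h, hiso, hhc, hhd, hsim⟩ := hs
  have hPcont : ContinuousOn (fun t => P (f t)) (Icc a b) := by
    have hl : LipschitzWith 1 P :=
      LipschitzWith.of_dist_le_mul (fun m m' => by simpa using hPnonexp m m')
    exact hl.continuous.comp_continuousOn hfc
  have hC1 : ∀ t ∈ Icc a b, f t ∈ s := by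
    by_contra hcon
    push_neg at hcon
    obtain ⟨t0, ht0, ht0s⟩ := hcon
    set K := {t ∈ Icc a b | f t ∈ s} with hKdef
    have hKcl : IsClosed K := hfc.preimage_isClosed_of_isClosed isClosed_Icc hsClosed
    have haK : a ∈ K := ⟨⟨le_rfl, hab⟩, by rw [hfa]; exact hxs⟩
    have hbK : b ∈ K := ⟨⟨hab, le_rfl⟩, by rw [hfb]; exact hys⟩
    set K1 := K ∩ Icc a t0 with hK1def
    set K2 := K ∩ Icc t0 b with hK2def
    have hK1cl : IsClosed K1 := hKcl.inter isClosed_Icc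
    have hK2cl : IsClosed K2 := hKcl.inter isClosed_Icc
    have haK1 : a ∈ K1 := ⟨haK, ⟨le_rfl, ht0.1⟩⟩
    have hbK2 : b ∈ K2 := ⟨hbK, ⟨ht0.2, le_rfl⟩⟩
    have hK1bdd : BddAbove K1 := ⟨t0, fun t ht => ht.2.2⟩
    have hK2bdd : BddBelow K2 := ⟨t0, fun t ht => ht.2.1⟩
    set c1 := sSup K1 with hc1def
    set c2 := sInf K2 with hc2def
    have hc1m : c1 ∈ K1 := hK1cl.csSup_mem ⟨a, haK1⟩ hK1bdd
    have hc2m : c2 ∈ K2 := hK2cl.csInf_mem ⟨b, hbK2⟩ hK2bdd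
    have hc1lt : c1 < t0 := lt_of_le_of_ne hc1m.2.2 (fun he => ht0s (he ▸ hc1m.1.2))
    have hc2gt : t0 < c2 := lt_of_le_of_ne hc2m.2.1 (fun he => ht0s (he ▸ hc2m.1.2))
    have hc1I : c1 ∈ Icc a b := hc1m.1.1
    have hc2I : c2 ∈ Icc a b := hc2m.1.1
    have hins : ∀ r ∈ Ioo c1 c2, f r ∉ s := by
      intro r hr hrs
      have hrI : r ∈ Icc a b := ⟨le_trans hc1I.1 hr.1.le, le_trans hr.2.le hc2I.2⟩
      rcases le_total r t0 with hle | hge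
      · exact absurd (le_csSup hK1bdd ⟨⟨hrI, hrs⟩, ⟨hrI.1, hle⟩⟩) (not_le.2 hr.1)
      · exact absurd (csInf_le hK2bdd ⟨⟨hrI, hrs⟩, ⟨hge, hrI.2⟩⟩) (not_le.2 hr.2)
    have hIooI : ∀ r ∈ Ioo c1 c2, r ∈ Icc a b := fun r hr =>
      ⟨le_trans hc1I.1 hr.1.le, le_trans hr.2.le hc2I.2⟩
    -- local constancy
    have hloc : ∀ r ∈ Ioo c1 c2, ∃ δ > 0, ∀ r' ∈ Icc a b, |r' - r| < δ → P (f r') = P (f r) := by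
      intro r hr
      have hrI := hIooI r hr
      have hpos : 0 < dist (f r) (P (f r)) :=
        dist_pos.mpr (fun he => hins r hr (he ▸ hPmem (f r)))
      obtain ⟨δ, hδ, hδp⟩ := Metric.continuousOn_iff.mp hfc r hrI _ hpos
      exact ⟨δ, hδ, fun r' hr' hlt' =>
        hB (f r) (f r') (hδp r' hr' (by rwa [Real.dist_eq]))⟩
    -- sweep right: constant on [t0, c2)
    have hright : ∀ r ∈ Ico t0 c2, P (f r) = P (f t0) := by
      intro r hr
      set S := {ρ ∈ Icc t0 r | P (f ρ) = P (f t0)} with hSdef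
      have hrI : r ∈ Icc a b := ⟨le_trans ht0.1 hr.1, le_trans hr.2.le hc2I.2⟩
      have hScl : IsClosed S := by
        have : ContinuousOn (fun t => P (f t)) (Icc t0 r) :=
          hPcont.mono (Icc_subset_Icc ht0.1 hrI.2)
        exact this.preimage_isClosed_of_isClosed isClosed_Icc isClosed_singleton
      have ht0S : t0 ∈ S := ⟨⟨le_rfl, hr.1⟩, rfl⟩
      have hSbdd : BddAbove S := ⟨r, fun t ht => ht.1.2⟩
      set T := sSup S with hTdef
      have hTS : T ∈ S := hScl.csSup_mem ⟨t0, ht0S⟩ hSbdd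
      rcases eq_or_lt_of_le hTS.1.2 with heq | hlt2
      · rw [← heq]; exact hTS.2
      · exfalso
        have hTIoo : T ∈ Ioo c1 c2 := ⟨lt_of_lt_of_le hc1lt hTS.1.1, lt_trans hlt2 hr.2⟩
        obtain ⟨δ, hδ, hδp⟩ := hloc T hTIoo
        set r2 := min (T + δ/2) r with hr2def
        have hr2gt : T < r2 := lt_min (by linarith) hlt2
        have hr2le : r2 ≤ r := min_le_right _ _
        have hr2I : r2 ∈ Icc a b := ⟨le_trans ht0.1 (le_trans hTS.1.1 hr2gt.le), le_trans hr2le hrI.2⟩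
        have : P (f r2) = P (f T) := hδp r2 hr2I (by
          rw [abs_of_pos (by linarith)]
          have : r2 ≤ T + δ/2 := min_le_left _ _
          linarith)
        have hr2S : r2 ∈ S := ⟨⟨le_trans hTS.1.1 hr2gt.le, hr2le⟩, this.trans hTS.2⟩
        exact absurd (le_csSup hSbdd hr2S) (not_le.2 hr2gt)
    -- sweep left: constant on (c1, t0]
    have hleft : ∀ r ∈ Ioc c1 t0, P (f r) = P (f t0) := by
      intro r hr
      set S := {ρ ∈ Icc r t0 | P (f ρ) = P (f t0)} with hSdef
      have hrI : r ∈ Icc a b := ⟨le_trans hc1I.1 hr.1.le, le_trans hr.2 ht0.2⟩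
      have hScl : IsClosed S := by
        have : ContinuousOn (fun t => P (f t)) (Icc r t0) :=
          hPcont.mono (Icc_subset_Icc hrI.1 ht0.2)
        exact this.preimage_isClosed_of_isClosed isClosed_Icc isClosed_singleton
      have ht0S : t0 ∈ S := ⟨⟨hr.2, le_rfl⟩, rfl⟩
      have hSbdd : BddBelow S := ⟨r, fun t ht => ht.1.1⟩
      set T := sInf S with hTdef
      have hTS : T ∈ S := hScl.csInf_mem ⟨t0, ht0S⟩ hSbdd
      rcases eq_or_lt_of_le hTS.1.1 with heq | hlt2
      · rw [heq]; exact hTS.2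
      · exfalso
        have hTIoo : T ∈ Ioo c1 c2 := ⟨lt_of_lt_of_le hr.1 hlt2.le, lt_of_le_of_lt hTS.1.2 hc2gt⟩
        obtain ⟨δ, hδ, hδp⟩ := hloc T hTIoo
        set r2 := max (T - δ/2) r with hr2def
        have hr2lt : r2 < T := max_lt (by linarith) hlt2
        have hr2ge : r ≤ r2 := le_max_right _ _
        have hr2I : r2 ∈ Icc a b := ⟨le_trans hrI.1 hr2ge, le_trans hr2lt.le (le_trans hTS.1.2 ht0.2)⟩
        have : P (f r2) = P (f T) := hδp r2 hr2I (by
          rw [abs_of_neg (by linarith)]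
          have : T - δ/2 ≤ r2 := le_max_left _ _
          linarith)
        have hr2S : r2 ∈ S := ⟨⟨hr2ge, le_trans hr2lt.le hTS.1.2⟩, this.trans hTS.2⟩
        exact absurd (csInf_le hSbdd hr2S) (not_le.2 hr2lt)
    -- limits at the endpoints
    have hc2eq : P (f c2) = P (f t0) := by
      by_contra hne
      have hpos : 0 < dist (P (f t0)) (P (f c2)) := dist_pos.mpr (fun he => hne he.symm)
      obtain ⟨δ, hδ, hδp⟩ := Metric.continuousOn_iff.mp hPcont c2 hc2I _ hpos
      set r := max t0 (c2 - δ/2) with hrdef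
      have hr1 : t0 ≤ r := le_max_left _ _
      have hrlt : r < c2 := max_lt hc2gt (by linarith)
      have hrI : r ∈ Icc a b := ⟨le_trans ht0.1 hr1, le_trans hrlt.le hc2I.2⟩
      have hrd : dist r c2 < δ := by
        rw [Real.dist_eq, abs_of_neg (by linarith)]
        have : c2 - δ/2 ≤ r := le_max_right _ _
        linarith
      have := hδp r hrI hrd
      rw [hright r ⟨hr1, hrlt⟩] at this
      exact absurd this (by rw [dist_comm]; exact not_lt.2 le_rfl)
    have hc1eq : P (f c1) = P (f t0) := by
      by_contra hne
      have hpos : 0 < dist (P (f t0)) (P (f c1)) := dist_pos.mpr (fun he => hne he.symm)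
      obtain ⟨δ, hδ, hδp⟩ := Metric.continuousOn_iff.mp hPcont c1 hc1I _ hpos
      set r := min t0 (c1 + δ/2) with hrdef
      have hr1 : r ≤ t0 := min_le_left _ _
      have hrgt : c1 < r := lt_min hc1lt (by linarith)
      have hrI : r ∈ Icc a b := ⟨le_trans hc1I.1 hrgt.le, le_trans hr1 ht0.2⟩
      have hrd : dist r c1 < δ := by
        rw [Real.dist_eq, abs_of_pos (by linarith)]
        have : r ≤ c1 + δ/2 := min_le_right _ _
        linarith
      have := hδp r hrI hrd
      rw [hleft r ⟨hrgt, hr1⟩] at this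
      exact absurd this (by rw [dist_comm]; exact not_lt.2 le_rfl)
    have hfc1 : P (f c1) = f c1 := hPfix (f c1) hc1m.1.2
    have hfc2 : P (f c2) = f c2 := hPfix (f c2) hc2m.1.2
    have : f c1 = f c2 := by rw [← hfc1, ← hfc2, hc1eq, hc2eq]
    have : c1 = c2 := hfi hc1I hc2I this
    linarith
  -- A ⊆ s
  have hAsub : A ⊆ s := by
    rw [hAim]; rintro v ⟨t, ht, rfl⟩; exact hC1 t ht
  -- s ⊆ A by IVT
  have hdxy : dist x y = d - c := by
    rw [← hhc, ← hhd, hiso c ⟨le_rfl, hcd⟩ d ⟨hcd, le_rfl⟩, abs_of_nonpos (by linarith : c - d ≤ 0)]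
    ring
  have hψc : ContinuousOn (fun t => c + dist x (f t)) (Icc a b) :=
    continuousOn_const.add ((continuous_const.dist continuous_id).comp_continuousOn hfc)
  have hIVT := intermediate_value_Icc hab hψc
  refine Subset.antisymm hAsub fun q hq => ?_
  rw [hsim] at hq
  obtain ⟨rq, hrq, rfl⟩ := hq
  have hψa : c + dist x (f a) = c := by rw [hfa, dist_self]; ring
  have hψb : c + dist x (f b) = d := by rw [hfb, hdxy]; ring
  have hrq' : rq ∈ Icc (c + dist x (f a)) (c + dist x (f b)) := by
    rw [hψa, hψb]; exact hrq
  obtain ⟨t, ht, hψt⟩ := hIVT hrq'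
  have hfts := hC1 t ht
  rw [hsim] at hfts
  obtain ⟨r', hr', hfr'⟩ := hfts
  have hdx : dist x (f t) = r' - c := by
    rw [← hfr', ← hhc, hiso c ⟨le_rfl, hcd⟩ r' hr', abs_of_nonpos (by linarith [hr'.1] : c - r' ≤ 0)]
    ring
  have hr'eq : r' = rq := by
    simp only [hdx] at hψt
    linarith
  rw [hAim]
  exact ⟨t, ht, by rw [← hfr', hr'eq]⟩
end

section
/- A metric space M in which every pair of points is joined by a unique arc that is isometric to a real interval satisfies: (i) unique geodesic segments exist between all pairs of points, and (ii) if [y,x] ∩ [x,z] = {x}, then [y,x] ∪ [x,z] = [y,z]. -/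
open Set

lemma contOn_union' {α β : Type*} [TopologicalSpace α] [TopologicalSpace β]
    {f : α → β} {s t : Set α} (hsc : IsClosed s) (htc : IsClosed t)
    (hs : ContinuousOn f s) (ht : ContinuousOn f t) : ContinuousOn f (s ∪ t) := by
  intro x hx
  have hcs : ContinuousWithinAt f s x := by
    by_cases h : x ∈ s
    · exact hs x h
    · exact continuousWithinAt_of_notMem_closure (by rwa [hsc.closure_eq])
  have hct : ContinuousWithinAt f t x := by
    by_cases h : x ∈ t
    · exact ht x h
    · exact continuousWithinAt_of_notMem_closure (by rwa [htc.closure_eq])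
  exact hcs.union hct

lemma geod_arc {X : Type*} [MetricSpace X] {s : Set X} {x y : X}
    (h : IsGeodesicSegment s x y) : IsArc s x y := by
  obtain ⟨a, b, hab, f, hf, hfa, hfb, hs⟩ := h
  refine ⟨a, b, hab, f, ?_, ?_, hfa, hfb, hs⟩
  · refine LipschitzOnWith.continuousOn (K := 1) ?_
    intro u hu v hv
    rw [edist_dist, edist_dist, hf u hu v hv, Real.dist_eq]
    simp
  · intro u hu v hv huv
    have := hf u hu v hv
    rw [huv, dist_self] at this
    have : u - v = 0 := by
      have := this.symm
      rwa [abs_eq_zero] at this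
    linarith

theorem unique_arcs_implies_unique_geodesics_and_gluing {X : Type*} [MetricSpace X]
    (harc : ∀ x y : X, ∃! A : Set X, IsArc A x y)
    (hiso : ∀ (x y : X) (A : Set X), IsArc A x y → IsGeodesicSegment A x y) :
    (∀ x y : X, ∃! s : Set X, IsGeodesicSegment s x y) ∧
    (∀ (x y z : X) (s t : Set X), IsGeodesicSegment s y x →
      IsGeodesicSegment t x z → s ∩ t = {x} → IsGeodesicSegment (s ∪ t) y z) := by
  constructor
  · intro x y
    obtain ⟨A, hA, hAu⟩ := harc x y
    exact ⟨A, hiso x y A hA, fun s hs => hAu s (geod_arc hs)⟩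
  · intro x y z s t hs ht hst
    apply hiso
    obtain ⟨a, b, hab, f, hfc, hfi, hfa, hfb, hseq⟩ := geod_arc hs
    obtain ⟨c, d, hcd, g, hgc, hgi, hgcx, hgd, hteq⟩ := geod_arc ht
    set e := b + (d - c) with he
    have hbe : b ≤ e := by simp [he]; linarith
    have hae : a ≤ e := hab.trans hbe
    set h : ℝ → X := fun u => if u ≤ b then f u else g (u - b + c) with hh
    have hicc : Icc a e = Icc a b ∪ Icc b e := (Icc_union_Icc_eq_Icc hab hbe).symm
    -- h agrees with f on Icc a b
    have heqf : EqOn h f (Icc a b) := fun u hu => if_pos hu.2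
    -- h agrees with g ∘ shift on Icc b e
    have heqg : EqOn h (fun u => g (u - b + c)) (Icc b e) := by
      intro u hu
      by_cases hub : u ≤ b
      · have : u = b := le_antisymm hub hu.1
        subst this
        simp only [hh, if_pos le_rfl, sub_self, zero_add]
        rw [hfb, hgcx]
      · exact if_neg hub
    have hshift : MapsTo (fun u : ℝ => u - b + c) (Icc b e) (Icc c d) := by
      intro u hu
      obtain ⟨h1, h2⟩ := hu
      rw [he] at h2
      simp only [mem_Icc]
      constructor <;> linarith
    refine ⟨a, e, hae, h, ?_, ?_, ?_, ?_, ?_⟩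
    · rw [hicc]
      apply contOn_union' isClosed_Icc isClosed_Icc
      · exact ContinuousOn.congr (hfc) heqf
      · refine ContinuousOn.congr ?_ heqg
        exact hgc.comp (by fun_prop) hshift
    · -- injectivity
      rw [hicc]
      have key : ∀ u ∈ Icc a b, ∀ v ∈ Icc b e, h u = h v → u = v := by
        intro u hu v hv huv
        rw [heqf hu, heqg hv] at huv
        have huv' : f u = g (v - b + c) := huv
        have hvmem : v - b + c ∈ Icc c d := hshift hv
        by_cases hvb : v = b
        · subst hvb
          have huv2 : f u = g c := by rw [huv']; norm_num
          exact hfi hu (right_mem_Icc.2 hab) (by rw [hfb, ← hgcx]; exact huv2)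
        · have hmem : f u ∈ s ∩ t := by
            constructor
            · rw [hseq]; exact mem_image_of_mem f hu
            · rw [hteq, huv']; exact mem_image_of_mem g hvmem
          rw [hst, mem_singleton_iff] at hmem
          have hub : u = b := hfi hu (right_mem_Icc.2 hab) (by rw [hmem, hfb])
          have hvb2 : v - b + c = c := hgi hvmem (left_mem_Icc.2 hcd)
            (by rw [← huv', hmem, hgcx])
          have : v = b := by linarith
          exact absurd this hvb
      intro u hu v hv huv
      rcases hu with hu | hu <;> rcases hv with hv | hv
      · rw [heqf hu, heqf hv] at huv; exact hfi hu hv huv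
      · exact key u hu v hv huv
      · exact (key v hv u hu huv.symm).symm
      · rw [heqg hu, heqg hv] at huv
        have huv' : g (u - b + c) = g (v - b + c) := huv
        have h2 : u - b + c = v - b + c := hgi (hshift hu) (hshift hv) huv'
        linarith
    · show h a = y
      rw [heqf (left_mem_Icc.2 hab), hfa]
    · show h e = z
      have h1 : e - b + c = d := by rw [he]; ring
      calc h e = g (e - b + c) := heqg (right_mem_Icc.2 hbe)
        _ = z := by rw [h1, hgd]
    · have himg : (fun u : ℝ => g (u - b + c)) '' Icc b e = g '' Icc c d := by
        ext w
        simp only [mem_image, mem_Icc]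
        constructor
        · rintro ⟨u, ⟨h1, h2⟩, rfl⟩
          rw [he] at h2
          exact ⟨u - b + c, ⟨by linarith, by linarith⟩, rfl⟩
        · rintro ⟨v, ⟨h1, h2⟩, rfl⟩
          refine ⟨v - c + b, ⟨by linarith, by rw [he]; linarith⟩, ?_⟩
          congr 1
          ring
      rw [hicc, image_union, heqf.image_eq, heqg.image_eq, himg, ← hseq, ← hteq]
end
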